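/- There exists an adjacency matrix A maximizing the spectral radius λ₁ over M(D) (the set of adjacency matrices of simple graphs with non-increasing degree sequence D) which is a sink of the oriented graph G(D); that is, A admits no negative symmetric checkerboard: there are no distinct indices i<j, k<l with a_{il}=a_{jk}=1 and a_{ik}=a_{jl}=0 whose positive switch would strictly change A. -/

import Mathlib

/-- The largest eigenvalue of a real symmetric matrix, via its Rayleigh-quotient
characterization `λ₁(A) = max_{‖x‖₂ = 1} xᵀ A x`. -/
noncomputable def lam1 {n : ℕ} (A : Matrix (Fin n) (Fin n) ℝ) : ℝ :=
  sSup {r | ∃ x : Fin n → ℝ, (∑ u, x u ^ 2) = 1 ∧ r = dotProduct x (A.mulVec x)}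

/-- `M(D)`: symmetric (0,1)-matrices with zero diagonal and row sums `D`. -/
def MemMD {n : ℕ} (D : Fin n → ℕ) (A : Matrix (Fin n) (Fin n) ℝ) : Prop :=
  (∀ u v, A u v = 0 ∨ A u v = 1) ∧ A.IsSymm ∧ (∀ u, A u u = 0) ∧
  (∀ u, ∑ v, A u v = (D u : ℝ))

open Finset

namespace Stmt13

variable {n : ℕ}


/-- Quadratic form as a double sum. -/
def RQ (M : Matrix (Fin (n+1)) (Fin (n+1)) ℝ) (x : Fin (n+1) → ℝ) : ℝ :=
  ∑ u, ∑ v, M u v * (x u * x v)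

lemma dot_eq_RQ (M : Matrix (Fin (n+1)) (Fin (n+1)) ℝ) (x : Fin (n+1) → ℝ) :
    dotProduct x (M.mulVec x) = RQ M x := by
  unfold RQ dotProduct Matrix.mulVec dotProduct
  refine Finset.sum_congr rfl fun u _ => ?_
  rw [Finset.mul_sum]
  exact Finset.sum_congr rfl fun v _ => by ring

lemma rq_add (M P : Matrix (Fin (n+1)) (Fin (n+1)) ℝ) (x : Fin (n+1) → ℝ) :
    RQ (Matrix.of fun u v => M u v + P u v) x = RQ M x + RQ P x := by
  unfold RQ
  simp [add_mul, Finset.sum_add_distrib]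

lemma rq_pert (f g x : Fin (n+1) → ℝ) :
    RQ (Matrix.of fun u v => f u * g v + g u * f v) x
      = 2 * ((∑ u, f u * x u) * (∑ u, g u * x u)) := by
  have h1 : ∀ f g : Fin (n+1) → ℝ, (∑ u, ∑ v, f u * g v * (x u * x v))
      = (∑ u, f u * x u) * (∑ u, g u * x u) := by
    intro f g
    rw [Finset.sum_mul_sum]
    exact Finset.sum_congr rfl fun u _ => Finset.sum_congr rfl fun v _ => by ring
  unfold RQ
  calc (∑ u, ∑ v, (Matrix.of fun u v => f u * g v + g u * f v) u v * (x u * x v))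
      = (∑ u, ∑ v, (f u * g v * (x u * x v) + g u * f v * (x u * x v))) := by
        simp [add_mul]
    _ = (∑ u, ∑ v, f u * g v * (x u * x v)) + ∑ u, ∑ v, g u * f v * (x u * x v) := by
        simp [Finset.sum_add_distrib]
    _ = _ := by rw [h1 f g, h1 g f]; ring

lemma rowsum_pert (f g : Fin (n+1) → ℝ) (u : Fin (n+1)) :
    (∑ v, (f u * g v + g u * f v)) = f u * (∑ v, g v) + g u * (∑ v, f v) := by
  rw [Finset.sum_add_distrib, Finset.mul_sum, Finset.mul_sum]

lemma sum_pair_support (f : Fin (n+1) → ℝ) (i j : Fin (n+1)) (hij : i ≠ j)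
    (h : ∀ u, u ≠ i → u ≠ j → f u = 0) : ∑ u, f u = f i + f j := by
  rw [← Finset.sum_subset (Finset.subset_univ {i, j})]
  · rw [Finset.sum_pair hij]
  · intro u _ hu
    simp only [Finset.mem_insert, Finset.mem_singleton, not_or] at hu
    exact h u hu.1 hu.2

lemma isSymm_of (M : Matrix (Fin (n+1)) (Fin (n+1)) ℝ) (h : ∀ u v, M v u = M u v) :
    M.IsSymm := by
  show M.transpose = M
  ext u v
  rw [Matrix.transpose_apply]
  exact h u v



def Sph (n : ℕ) : Set (Fin (n+1) → ℝ) := {x | (∑ u, x u ^ 2) = 1}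

lemma sph_nonempty : (Sph n).Nonempty := by
  refine ⟨fun u => if u = 0 then 1 else 0, ?_⟩
  show (∑ u : Fin (n+1), (if u = 0 then (1:ℝ) else 0) ^ 2) = 1
  have : ∀ u : Fin (n+1), (if u = 0 then (1:ℝ) else 0) ^ 2 = if u = 0 then 1 else 0 := by
    intro u; split <;> norm_num
  rw [Finset.sum_congr rfl fun u _ => this u, Finset.sum_ite_eq' univ (0 : Fin (n+1)) fun _ => (1:ℝ)]
  simp

lemma abs_le_one_of_mem_sph {x : Fin (n+1) → ℝ} (hx : x ∈ Sph n) (u : Fin (n+1)) :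
    |x u| ≤ 1 := by
  have h1 : x u ^ 2 ≤ 1 := by
    have := Finset.single_le_sum (f := fun u => x u ^ 2) (fun v _ => sq_nonneg (x v)) (mem_univ u)
    rw [hx] at this; exact this
  nlinarith [abs_nonneg (x u), sq_abs (x u)]

lemma isCompact_sph : IsCompact (Sph n) := by
  have hc : Continuous fun x : Fin (n+1) → ℝ => ∑ u, x u ^ 2 :=
    continuous_finset_sum _ fun u _ => (continuous_apply u).pow 2
  apply Metric.isCompact_of_isClosed_isBounded
  · have : Sph n = (fun x : Fin (n+1) → ℝ => ∑ u, x u ^ 2) ⁻¹' {1} := rfl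
    rw [this]
    exact IsClosed.preimage hc isClosed_singleton
  · apply Bornology.IsBounded.subset (Metric.isBounded_closedBall (x := (0 : Fin (n+1) → ℝ)) (r := 1))
    intro x hx
    rw [Metric.mem_closedBall, dist_zero_right]
    rw [pi_norm_le_iff_of_nonneg zero_le_one]
    intro u
    rw [Real.norm_eq_abs]
    exact abs_le_one_of_mem_sph hx u

lemma continuous_rq (M : Matrix (Fin (n+1)) (Fin (n+1)) ℝ) : Continuous fun x => RQ M x := by
  unfold RQ
  exact continuous_finset_sum _ fun u _ => continuous_finset_sum _ fun v _ =>
    continuous_const.mul ((continuous_apply u).mul (continuous_apply v))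

lemma continuous_lin (w : Fin (n+1) → ℝ) : Continuous fun x : Fin (n+1) → ℝ => ∑ u, w u * x u :=
  continuous_finset_sum _ fun u _ => continuous_const.mul (continuous_apply u)

def lamSet (A : Matrix (Fin (n+1)) (Fin (n+1)) ℝ) : Set ℝ :=
  {r | ∃ x : Fin (n+1) → ℝ, (∑ u, x u ^ 2) = 1 ∧ r = dotProduct x (A.mulVec x)}

lemma lam1_eq_sSup (A : Matrix (Fin (n+1)) (Fin (n+1)) ℝ) : lam1 A = sSup (lamSet A) := rfl

lemma bddAbove_lamSet {A : Matrix (Fin (n+1)) (Fin (n+1)) ℝ}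
    (h01 : ∀ u v, A u v = 0 ∨ A u v = 1) : BddAbove (lamSet A) := by
  refine ⟨((n:ℝ)+1) * ((n:ℝ)+1), ?_⟩
  rintro r ⟨x, hx, rfl⟩
  rw [dot_eq_RQ]
  have hb : ∀ u v : Fin (n+1), A u v * (x u * x v) ≤ 1 := by
    intro u v
    have h1 := abs_le_one_of_mem_sph hx u
    have h2 := abs_le_one_of_mem_sph hx v
    have h3 : x u * x v ≤ 1 := by
      nlinarith [abs_nonneg (x u), abs_nonneg (x v), le_abs_self (x u * x v), abs_mul (x u) (x v)]
    rcases h01 u v with h | h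
    · rw [h, zero_mul]; norm_num
    · rw [h, one_mul]; exact h3
  calc RQ A x ≤ ∑ u : Fin (n+1), ∑ v : Fin (n+1), (1:ℝ) := by
        refine Finset.sum_le_sum fun u _ => Finset.sum_le_sum fun v _ => hb u v
    _ = ((n:ℝ)+1) * ((n:ℝ)+1) := by
        simp [Finset.sum_const, Finset.card_univ]; push_cast; ring

lemma rq_le_lam1 {A : Matrix (Fin (n+1)) (Fin (n+1)) ℝ}
    (h01 : ∀ u v, A u v = 0 ∨ A u v = 1) {x : Fin (n+1) → ℝ} (hx : x ∈ Sph n) :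
    dotProduct x (A.mulVec x) ≤ lam1 A :=
  le_csSup (bddAbove_lamSet h01) ⟨x, hx, rfl⟩

/-- Attainment of `lam1` together with a maximal linear functional value among
nonnegative attaining unit vectors. -/
lemma lam1_psi_attained {A : Matrix (Fin (n+1)) (Fin (n+1)) ℝ}
    (h01 : ∀ u v, A u v = 0 ∨ A u v = 1) (w : Fin (n+1) → ℝ) :
    ∃ x, x ∈ Sph n ∧ (∀ u, 0 ≤ x u) ∧ dotProduct x (A.mulVec x) = lam1 A ∧
      (∀ y, y ∈ Sph n → (∀ u, 0 ≤ y u) → dotProduct y (A.mulVec y) = lam1 A →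
        (∑ u, w u * y u) ≤ ∑ u, w u * x u) := by
  -- step 1: maximize RQ on the sphere
  obtain ⟨z, hzS, hz⟩ := isCompact_sph.exists_isMaxOn sph_nonempty (continuous_rq A).continuousOn
  have hzmax : ∀ y ∈ Sph n, RQ A y ≤ RQ A z := fun y hy => hz hy
  have hlam : lam1 A = RQ A z := by
    rw [lam1_eq_sSup]
    apply IsGreatest.csSup_eq
    constructor
    · exact ⟨z, hzS, (dot_eq_RQ A z).symm⟩
    · rintro r ⟨y, hy, rfl⟩
      rw [dot_eq_RQ]
      exact hzmax y hy
  -- step 2: the set of nonneg attaining unit vectors is compact and nonempty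
  set E : Set (Fin (n+1) → ℝ) :=
    Sph n ∩ ({y | ∀ u, 0 ≤ y u} ∩ (fun y => RQ A y) ⁻¹' {lam1 A}) with hE
  have hEne : E.Nonempty := by
    refine ⟨fun u => |z u|, ?_, fun u => abs_nonneg _, ?_⟩
    · show (∑ u, |z u| ^ 2) = 1
      calc (∑ u, |z u| ^ 2) = ∑ u, z u ^ 2 := by
            exact Finset.sum_congr rfl fun u _ => sq_abs (z u)
        _ = 1 := hzS
    · show RQ A (fun u => |z u|) = lam1 A
      have habs_mem : (fun u => |z u|) ∈ Sph n := by
        show (∑ u, |z u| ^ 2) = 1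
        calc (∑ u, |z u| ^ 2) = ∑ u, z u ^ 2 :=
              Finset.sum_congr rfl fun u _ => sq_abs (z u)
          _ = 1 := hzS
      have h1 : RQ A z ≤ RQ A (fun u => |z u|) := by
        unfold RQ
        refine Finset.sum_le_sum fun u _ => Finset.sum_le_sum fun v _ => ?_
        have hApos : 0 ≤ A u v := by rcases h01 u v with h | h <;> rw [h] <;> norm_num
        have : z u * z v ≤ |z u| * |z v| := by
          calc z u * z v ≤ |z u * z v| := le_abs_self _
            _ = |z u| * |z v| := abs_mul _ _
        exact mul_le_mul_of_nonneg_left this hApos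
      have h2 : RQ A (fun u => |z u|) ≤ RQ A z := hzmax _ habs_mem
      rw [hlam]; linarith
  have hEclosed : IsClosed ({y : Fin (n+1) → ℝ | ∀ u, 0 ≤ y u} ∩ (fun y => RQ A y) ⁻¹' {lam1 A}) := by
    apply IsClosed.inter
    · have : {y : Fin (n+1) → ℝ | ∀ u, 0 ≤ y u} = ⋂ u, {y | 0 ≤ y u} := by
        ext y; simp
      rw [this]
      exact isClosed_iInter fun u => isClosed_le continuous_const (continuous_apply u)
    · exact IsClosed.preimage (continuous_rq A) isClosed_singleton
  have hEcomp : IsCompact E := isCompact_sph.inter_right hEclosed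
  obtain ⟨x, hxE, hxmax⟩ := hEcomp.exists_isMaxOn hEne (continuous_lin w).continuousOn
  obtain ⟨hxS, hxnn, hxRQ⟩ := hxE
  refine ⟨x, hxS, hxnn, ?_, ?_⟩
  · rw [dot_eq_RQ]; exact hxRQ
  · intro y hyS hynn hyRQ
    refine hxmax (⟨hyS, hynn, ?_⟩ : y ∈ E)
    simp only [Set.mem_preimage, Set.mem_singleton_iff]
    rw [← dot_eq_RQ]; exact hyRQ



open Classical in
lemma finite_MD (D : Fin (n+1) → ℕ) : {A : Matrix (Fin (n+1)) (Fin (n+1)) ℝ | MemMD D A}.Finite := by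
  apply Set.Finite.subset (Set.finite_range
    (fun b : Fin (n+1) → Fin (n+1) → Bool => (Matrix.of fun u v => if b u v then (1:ℝ) else 0)))
  intro A hA
  refine ⟨fun u v => if A u v = 1 then true else false, ?_⟩
  ext u v
  rcases hA.1 u v with h | h <;> simp [Matrix.of_apply, h]

lemma sum_ind {T : Finset (Fin (n+1))} :
    (∑ v, if v ∈ T then (1:ℝ) else 0) = (T.card : ℝ) := by
  rw [Finset.sum_ite_mem, Finset.univ_inter, Finset.sum_const, nsmul_eq_mul, mul_one]

lemma sum_ind_mul {T : Finset (Fin (n+1))} (y : Fin (n+1) → ℝ) :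
    (∑ v, (if v ∈ T then (1:ℝ) else 0) * y v) = ∑ v ∈ T, y v := by
  have h1 : ∀ v, (if v ∈ T then (1:ℝ) else 0) * y v = if v ∈ T then y v else 0 := by
    intro v; split <;> simp
  rw [Finset.sum_congr rfl fun v _ => h1 v, Finset.sum_ite_mem, Finset.univ_inter]

lemma sum_e (a : Fin (n+1)) : (∑ u, if u = a then (1:ℝ) else 0) = 1 := by
  rw [Finset.sum_ite_eq' univ a fun _ => (1:ℝ)]; simp

lemma sum_e_mul (a : Fin (n+1)) (x : Fin (n+1) → ℝ) :
    (∑ u, (if u = a then (1:ℝ) else 0) * x u) = x a := by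
  have : ∀ u, (if u = a then (1:ℝ) else 0) * x u = if u = a then x u else 0 := by
    intro u; split <;> simp
  rw [Finset.sum_congr rfl fun u _ => this u, Finset.sum_ite_eq' univ a x]; simp


def ee (a : Fin (n+1)) : Fin (n+1) → ℝ := fun u => if u = a then 1 else 0

lemma sum_ee (a : Fin (n+1)) : (∑ u, ee a u) = 1 := sum_e a

lemma memMD_switch (D : Fin (n+1) → ℕ) (A : Matrix (Fin (n+1)) (Fin (n+1)) ℝ)
    (hA : MemMD D A) (i j k l : Fin (n+1))
    (hij : i ≠ j) (hkl : k ≠ l) (hik : i ≠ k) (hil : i ≠ l) (hjk : j ≠ k) (hjl : j ≠ l)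
    (hAil : A i l = 1) (hAjk : A j k = 1) (hAik : A i k = 0) (hAjl : A j l = 0) :
    MemMD D (Matrix.of fun u v => A u v +
      ((ee i u - ee j u) * (ee k v - ee l v) + (ee k u - ee l u) * (ee i v - ee j v))) := by
  obtain ⟨h01, hsym, hdiag, hrow⟩ := hA
  have hAli : A l i = 1 := (hsym.apply i l).trans hAil
  have hAkj : A k j = 1 := (hsym.apply j k).trans hAjk
  have hAki : A k i = 0 := (hsym.apply i k).trans hAik
  have hAlj : A l j = 0 := (hsym.apply j l).trans hAjl
  refine ⟨?_, ?_, ?_, ?_⟩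
  · -- entries 0/1
    intro u v
    simp only [Matrix.of_apply]
    by_cases hui : u = i
    · by_cases hvk : v = k
      · right
        simp [ee, hui, hvk, hij, hik, hil, hkl, hAik]
      · by_cases hvl : v = l
        · left
          simp [ee, hui, hvl, hij, hik, hil, Ne.symm hkl, hAil]
        · simpa [ee, hui, hij, hik, hil, hvk, hvl] using h01 u v
    · by_cases huj : u = j
      · by_cases hvk : v = k
        · left
          simp [ee, huj, hvk, Ne.symm hij, hjk, hjl, hkl, hAjk]
        · by_cases hvl : v = l
          · right
            simp [ee, huj, hvl, Ne.symm hij, hjk, hjl, Ne.symm hkl, hAjl]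
          · simpa [ee, huj, hui, Ne.symm hij, hjk, hjl, hvk, hvl] using h01 u v
      · by_cases huk : u = k
        · by_cases hvi : v = i
          · right
            simp [ee, huk, hvi, Ne.symm hik, Ne.symm hjk, hkl, hij, hAki]
          · by_cases hvj : v = j
            · left
              simp [ee, huk, hvj, Ne.symm hik, Ne.symm hjk, hkl, Ne.symm hij, hAkj]
            · simpa [ee, huk, hui, huj, Ne.symm hik, Ne.symm hjk, hkl, hvi, hvj] using h01 u v
        · by_cases hul : u = l
          · by_cases hvi : v = i
            · left
              simp [ee, hul, hvi, Ne.symm hil, Ne.symm hjl, Ne.symm hkl, hij, hAli]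
            · by_cases hvj : v = j
              · right
                simp [ee, hul, hvj, Ne.symm hil, Ne.symm hjl, Ne.symm hkl, Ne.symm hij, hAlj]
              · simpa [ee, hul, hui, huj, huk, Ne.symm hil, Ne.symm hjl, Ne.symm hkl, hvi, hvj] using h01 u v
          · simpa [ee, hui, huj, huk, hul] using h01 u v
  · -- symmetry
    apply isSymm_of
    intro u v
    simp only [Matrix.of_apply]
    rw [hsym.apply u v]
    ring
  · -- diagonal
    intro u
    simp only [Matrix.of_apply]
    have hz : (ee i u - ee j u) * (ee k u - ee l u) = 0 := by
      by_cases hui : u = i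
      · simp [ee, hui, hik, hil]
      · by_cases huj : u = j
        · simp [ee, huj, hjk, hjl]
        · simp [ee, hui, huj]
    have hz' : (ee k u - ee l u) * (ee i u - ee j u) = 0 := by rw [mul_comm]; exact hz
    rw [hdiag u, hz, hz']; ring
  · -- row sums
    intro u
    simp only [Matrix.of_apply]
    have hsg : (∑ v, (ee k v - ee l v)) = 0 := by
      rw [Finset.sum_sub_distrib, sum_ee, sum_ee]; ring
    have hsf : (∑ v, (ee i v - ee j v)) = 0 := by
      rw [Finset.sum_sub_distrib, sum_ee, sum_ee]; ring
    calc (∑ v, (A u v + ((ee i u - ee j u) * (ee k v - ee l v)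
            + (ee k u - ee l u) * (ee i v - ee j v))))
        = (∑ v, A u v) + ((ee i u - ee j u) * ∑ v, (ee k v - ee l v)
            + (ee k u - ee l u) * ∑ v, (ee i v - ee j v)) := by
          rw [Finset.sum_add_distrib, Finset.sum_add_distrib, Finset.mul_sum, Finset.mul_sum]
      _ = (D u : ℝ) := by rw [hrow u, hsg, hsf]; ring

lemma rq_add_pert (A : Matrix (Fin (n+1)) (Fin (n+1)) ℝ) (f g x : Fin (n+1) → ℝ) :
    RQ (Matrix.of fun u v => A u v + (f u * g v + g u * f v)) x
      = RQ A x + 2 * ((∑ u, f u * x u) * (∑ u, g u * x u)) := by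
  have h1 : ∀ f g : Fin (n+1) → ℝ, (∑ u, ∑ v, f u * g v * (x u * x v))
      = (∑ u, f u * x u) * (∑ u, g u * x u) := by
    intro f g
    rw [Finset.sum_mul_sum]
    exact Finset.sum_congr rfl fun u _ => Finset.sum_congr rfl fun v _ => by ring
  unfold RQ
  calc (∑ u, ∑ v, (Matrix.of fun u v => A u v + (f u * g v + g u * f v)) u v * (x u * x v))
      = ∑ u, ∑ v, (A u v * (x u * x v)
          + (f u * g v * (x u * x v) + g u * f v * (x u * x v))) := by
        refine Finset.sum_congr rfl fun u _ => Finset.sum_congr rfl fun v _ => ?_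
        simp only [Matrix.of_apply]; ring
    _ = (∑ u, ∑ v, A u v * (x u * x v)) + ((∑ u, ∑ v, f u * g v * (x u * x v))
          + ∑ u, ∑ v, g u * f v * (x u * x v)) := by
        simp [Finset.sum_add_distrib]
    _ = (∑ u, ∑ v, A u v * (x u * x v)) + 2 * ((∑ u, f u * x u) * (∑ u, g u * x u)) := by
        rw [h1 f g, h1 g f]; ring

lemma exists_transfer (D : Fin (n+1) → ℕ) (A : Matrix (Fin (n+1)) (Fin (n+1)) ℝ)
    (hA : MemMD D A) (i j : Fin (n+1)) (hij : i < j) (hDji : D j ≤ D i)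
    (x : Fin (n+1) → ℝ) (hxnn : ∀ u, 0 ≤ x u) (hxij : x i ≤ x j) :
    ∃ B' : Matrix (Fin (n+1)) (Fin (n+1)) ℝ, MemMD D B' ∧
      RQ A x ≤ RQ B' (fun u => x (Equiv.swap i j u)) := by
  obtain ⟨h01, hsym, hdiag, hrow⟩ := hA
  have hij' : i ≠ j := hij.ne
  set τ := Equiv.swap i j with hτ
  set B : Matrix (Fin (n+1)) (Fin (n+1)) ℝ := Matrix.of fun u v => A (τ u) (τ v) with hB
  have hB01 : ∀ u v, B u v = 0 ∨ B u v = 1 := fun u v => h01 _ _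
  have hBsym : ∀ u v, B v u = B u v := fun u v => hsym.apply (τ u) (τ v)
  have hBdiag : ∀ u, B u u = 0 := fun u => hdiag _
  have hBrow : ∀ u, (∑ v, B u v) = (D (τ u) : ℝ) := by
    intro u
    calc (∑ v, B u v) = ∑ v, A (τ u) v := Equiv.sum_comp τ (fun v => A (τ u) v)
      _ = (D (τ u) : ℝ) := hrow (τ u)
  have hBnn : ∀ u v, (0:ℝ) ≤ B u v := by
    intro u v; rcases hB01 u v with h | h <;> rw [h] <;> norm_num
  set t : ℕ := D i - D j with ht
  have htcast : (t:ℝ) = (D i:ℝ) - D j := by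
    rw [ht]; exact Nat.cast_sub hDji
  set W : Finset (Fin (n+1)) :=
    univ.filter (fun w => w ≠ i ∧ w ≠ j ∧ B j w = 1 ∧ B i w = 0) with hW
  -- counting: t ≤ W.card
  have hsum1 : (∑ v, (B j v - B i v)) = (D i : ℝ) - D j := by
    rw [Finset.sum_sub_distrib, hBrow j, hBrow i, hτ]
    rw [Equiv.swap_apply_left, Equiv.swap_apply_right]
  have hle : ∀ v, B j v - B i v ≤
      (if v ∈ W then (1:ℝ) else 0) + (if v = i then B j i else 0)
        + (if v = j then -(B i j) else 0) := by
    intro v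
    by_cases hvi : v = i
    · have hiW : i ∉ W := by simp [hW]
      simp [hvi, hiW, hij', hBdiag i]
    · by_cases hvj : v = j
      · have hjW : j ∉ W := by simp [hW]
        simp [hvj, hjW, Ne.symm hij', hBdiag j]
      · by_cases hvW : v ∈ W
        · have hv := (Finset.mem_filter.1 hvW).2
          simp [hvW, hvi, hvj, hv.2.2.1, hv.2.2.2]
        · have hnot : ¬(B j v = 1 ∧ B i v = 0) := by
            intro hcon
            exact hvW (Finset.mem_filter.2 ⟨mem_univ v, hvi, hvj, hcon.1, hcon.2⟩)
          simp only [if_neg hvW, if_neg hvi, if_neg hvj]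
          rcases hB01 j v with h | h
          · have := hBnn i v; rw [h]; linarith
          · rcases hB01 i v with h' | h'
            · exact absurd ⟨h, h'⟩ hnot
            · rw [h, h']; norm_num
  have hcard : t ≤ W.card := by
    have h2 : (D i:ℝ) - D j ≤
        ∑ v, ((if v ∈ W then (1:ℝ) else 0) + (if v = i then B j i else 0)
          + (if v = j then -(B i j) else 0)) := by
      rw [← hsum1]
      exact Finset.sum_le_sum fun v _ => hle v
    have h3 : (∑ v, ((if v ∈ W then (1:ℝ) else 0) + (if v = i then B j i else 0)
        + (if v = j then -(B i j) else 0))) = (W.card : ℝ) := by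
      rw [Finset.sum_add_distrib, Finset.sum_add_distrib, sum_ind]
      rw [Finset.sum_ite_eq' univ i (fun _ => B j i)]
      rw [Finset.sum_ite_eq' univ j (fun _ => -(B i j))]
      simp [hBsym i j]
    have h4 : (t:ℝ) ≤ (W.card:ℝ) := by rw [htcast]; rw [h3] at h2; exact h2
    exact_mod_cast h4
  obtain ⟨T, hTW, hTcard⟩ := Finset.exists_subset_card_eq hcard
  have hTmem : ∀ w ∈ T, w ≠ i ∧ w ≠ j ∧ B j w = 1 ∧ B i w = 0 :=
    fun w hw => (Finset.mem_filter.1 (hTW hw)).2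
  have hiT : i ∉ T := fun h => (hTmem i h).1 rfl
  have hjT : j ∉ T := fun h => (hTmem j h).2.1 rfl
  refine ⟨Matrix.of fun u v => B u v + ((ee i u - ee j u) * (if v ∈ T then (1:ℝ) else 0)
    + (if u ∈ T then (1:ℝ) else 0) * (ee i v - ee j v)), ⟨?_, ?_, ?_, ?_⟩, ?_⟩
  · -- entries 0/1
    intro u v
    simp only [Matrix.of_apply]
    by_cases hui : u = i
    · by_cases hvT : v ∈ T
      · right
        have h0 : B i v = 0 := (hTmem v hvT).2.2.2
        simp [ee, hui, hvT, hij', hiT, h0]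
      · simpa [ee, hui, hvT, hij', hiT] using hB01 u v
    · by_cases huj : u = j
      · by_cases hvT : v ∈ T
        · left
          have h1 : B j v = 1 := (hTmem v hvT).2.2.1
          simp [ee, huj, hvT, Ne.symm hij', hjT, h1]
        · simpa [ee, huj, hvT, Ne.symm hij', hjT] using hB01 u v
      · by_cases huT : u ∈ T
        · have hu := hTmem u huT
          by_cases hvi : v = i
          · right
            have h0 : B u i = 0 := (hBsym i u).trans hu.2.2.2
            simp [ee, hui, huj, huT, hvi, hij', hiT, h0]
          · by_cases hvj : v = j
            · left
              have h1 : B u j = 1 := (hBsym j u).trans hu.2.2.1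
              simp [ee, hui, huj, huT, hvj, Ne.symm hij', hjT, h1]
            · simpa [ee, hui, huj, huT, hvi, hvj] using hB01 u v
        · simpa [ee, hui, huj, huT] using hB01 u v
  · -- symmetry
    apply isSymm_of
    intro u v
    simp only [Matrix.of_apply]
    rw [hBsym u v]
    ring
  · -- diagonal
    intro u
    simp only [Matrix.of_apply]
    have hz : (ee i u - ee j u) * (if u ∈ T then (1:ℝ) else 0) = 0 := by
      by_cases hui : u = i
      · simp [ee, hui, hiT]
      · by_cases huj : u = j
        · simp [ee, huj, hjT]
        · simp [ee, hui, huj]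
    have hz' : (if u ∈ T then (1:ℝ) else 0) * (ee i u - ee j u) = 0 := by
      rw [mul_comm]; exact hz
    rw [hBdiag u, hz, hz']; ring
  · -- row sums
    intro u
    simp only [Matrix.of_apply]
    have hstep : (∑ v, (B u v + ((ee i u - ee j u) * (if v ∈ T then (1:ℝ) else 0)
        + (if u ∈ T then (1:ℝ) else 0) * (ee i v - ee j v))))
        = (D (τ u) : ℝ) + ((ee i u - ee j u) * (t:ℝ)
            + (if u ∈ T then (1:ℝ) else 0) * 0) := by
      rw [Finset.sum_add_distrib, Finset.sum_add_distrib, ← Finset.mul_sum, ← Finset.mul_sum]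
      rw [hBrow u, sum_ind, hTcard]
      have : (∑ v, (ee i v - ee j v)) = 0 := by
        rw [Finset.sum_sub_distrib, sum_ee, sum_ee]; ring
      rw [this]
    rw [hstep]
    by_cases hui : u = i
    · rw [hui]
      simp [ee, hτ, Equiv.swap_apply_left, hij', hiT]
      linarith [htcast]
    · by_cases huj : u = j
      · rw [huj]
        simp [ee, hτ, Equiv.swap_apply_right, Ne.symm hij', hjT]
        linarith [htcast]
      · have hτu : τ u = u := Equiv.swap_apply_of_ne_of_ne hui huj
        rw [hτu]
        simp [ee, hui, huj]
  · -- Rayleigh inequality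
    set y : Fin (n+1) → ℝ := fun u => x (τ u) with hy
    have hRB : RQ B y = RQ A x := by
      unfold RQ
      calc (∑ u, ∑ v, B u v * (y u * y v))
          = ∑ u, ∑ v, A (τ u) v * (x (τ u) * x v) := by
            refine Finset.sum_congr rfl fun u _ => ?_
            exact Equiv.sum_comp τ (fun v => A (τ u) v * (x (τ u) * x v))
        _ = ∑ u, ∑ v, A u v * (x u * x v) :=
            Equiv.sum_comp τ (fun u => ∑ v, A u v * (x u * x v))
    have hpert := rq_add_pert B (fun u => ee i u - ee j u)
      (fun v => if v ∈ T then (1:ℝ) else 0) y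
    have hf : (∑ u, (ee i u - ee j u) * y u) = x j - x i := by
      have : ∀ u, (ee i u - ee j u) * y u
          = (if u = i then (1:ℝ) else 0) * y u - (if u = j then (1:ℝ) else 0) * y u := by
        intro u; simp only [ee]; ring
      rw [Finset.sum_congr rfl fun u _ => this u, Finset.sum_sub_distrib,
        sum_e_mul, sum_e_mul]
      rw [hy]
      simp [hτ, Equiv.swap_apply_left, Equiv.swap_apply_right]
    have hg : (0:ℝ) ≤ ∑ u, (if u ∈ T then (1:ℝ) else 0) * y u := by
      rw [sum_ind_mul]
      exact Finset.sum_nonneg fun v _ => hxnn _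
    have hkey : RQ A x ≤ RQ (Matrix.of fun u v => B u v
        + ((ee i u - ee j u) * (if v ∈ T then (1:ℝ) else 0)
          + (if u ∈ T then (1:ℝ) else 0) * (ee i v - ee j v))) y := by
      rw [hpert, hRB, hf]
      have hnn := mul_nonneg (sub_nonneg.2 hxij) hg
      nlinarith
    exact hkey


lemma sum_ee_sub_mul (a b : Fin (n+1)) (z : Fin (n+1) → ℝ) :
    (∑ u, (ee a u - ee b u) * z u) = z a - z b := by
  have h : ∀ u, (ee a u - ee b u) * z u
      = (if u = a then (1:ℝ) else 0) * z u - (if u = b then (1:ℝ) else 0) * z u := by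
    intro u; simp only [ee]; ring
  rw [Finset.sum_congr rfl fun u _ => h u, Finset.sum_sub_distrib, sum_e_mul, sum_e_mul]

end Stmt13

/-- for a non-increasing degree sequence `D` with `M(D)` nonempty,
there is a maximizer of `λ₁` over `M(D)` that is a sink of `G(D)`, i.e. that admits
no negative symmetric checkerboard. -/
theorem stmt13 {n : ℕ} (D : Fin (n + 1) → ℕ) (hD : Antitone D)
    (hne : ∃ B, MemMD D B) :
    ∃ A : Matrix (Fin (n + 1)) (Fin (n + 1)) ℝ, MemMD D A ∧
      (∀ B, MemMD D B → lam1 B ≤ lam1 A) ∧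
      ¬ ∃ i j k l : Fin (n + 1), i < j ∧ k < l ∧
        i ≠ k ∧ i ≠ l ∧ j ≠ k ∧ j ≠ l ∧
        A i l = 1 ∧ A j k = 1 ∧ A i k = 0 ∧ A j l = 0 := by
  classical
  obtain ⟨B₀, hB₀⟩ := hne
  have hMDfin : {A : Matrix (Fin (n+1)) (Fin (n+1)) ℝ | MemMD D A}.Finite := Stmt13.finite_MD D
  obtain ⟨A₁, hA₁, hmax1⟩ := Set.exists_max_image _ lam1 hMDfin ⟨B₀, hB₀⟩
  set Λ : ℝ := lam1 A₁ with hΛ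
  have hmax : ∀ B, MemMD D B → lam1 B ≤ Λ := fun B hB => hmax1 B hB
  set wt : Fin (n+1) → ℝ := fun u => ((n:ℝ) + 1) - ((u : ℕ) : ℝ) with hwt
  have hwt_anti : ∀ i j : Fin (n+1), i < j → wt j < wt i := by
    intro i j hij
    have h1 : (i:ℕ) < (j:ℕ) := hij
    have h2 : ((i:ℕ):ℝ) < ((j:ℕ):ℝ) := by exact_mod_cast h1
    simp only [hwt]
    linarith
  set PsiSet : Matrix (Fin (n+1)) (Fin (n+1)) ℝ → Set ℝ := fun A =>
    {r | ∃ x, x ∈ Stmt13.Sph n ∧ (∀ u, 0 ≤ x u) ∧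
      dotProduct x (A.mulVec x) = lam1 A ∧ r = ∑ u, wt u * x u} with hPsiSet
  set Psi : Matrix (Fin (n+1)) (Fin (n+1)) ℝ → ℝ := fun A => sSup (PsiSet A) with hPsi
  have hPsiBdd : ∀ A : Matrix (Fin (n+1)) (Fin (n+1)) ℝ, BddAbove (PsiSet A) := by
    intro A
    refine ⟨∑ u, |wt u|, ?_⟩
    rintro r ⟨x, hxS, hxnn, _, rfl⟩
    refine Finset.sum_le_sum fun u _ => ?_
    have h1 := Stmt13.abs_le_one_of_mem_sph hxS u
    calc wt u * x u ≤ |wt u * x u| := le_abs_self _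
      _ = |wt u| * |x u| := abs_mul _ _
      _ ≤ |wt u| * 1 := mul_le_mul_of_nonneg_left h1 (abs_nonneg _)
      _ = |wt u| := mul_one _
  have hPsi_le : ∀ A r, r ∈ PsiSet A → r ≤ Psi A := fun A r hr => le_csSup (hPsiBdd A) hr
  set S1 : Set (Matrix (Fin (n+1)) (Fin (n+1)) ℝ) := {A | MemMD D A ∧ lam1 A = Λ} with hS1
  have hS1fin : S1.Finite := hMDfin.subset fun A hA => hA.1
  obtain ⟨A₂, hA₂, hmax2⟩ := Set.exists_max_image S1 Psi hS1fin ⟨A₁, hA₁, rfl⟩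
  set S2 : Set (Matrix (Fin (n+1)) (Fin (n+1)) ℝ) := {A | A ∈ S1 ∧ Psi A = Psi A₂} with hS2
  have hS2fin : S2.Finite := hS1fin.subset fun A hA => hA.1
  obtain ⟨A₃, hA₃, hmax3⟩ := Set.exists_max_image S2 (fun A => Stmt13.RQ A wt) hS2fin
    ⟨A₂, hA₂, rfl⟩
  obtain ⟨hA₃S1, hA₃Psi⟩ := hA₃
  obtain ⟨hA₃MD, hA₃lam⟩ := hA₃S1
  obtain ⟨x, hxS, hxnn, hxRQ, hxmaxlin⟩ := Stmt13.lam1_psi_attained hA₃MD.1 wt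
  have hPsiA₃ : Psi A₃ = ∑ u, wt u * x u := by
    apply IsGreatest.csSup_eq
    constructor
    · exact ⟨x, hxS, hxnn, hxRQ, rfl⟩
    · rintro r ⟨y, hyS, hynn, hyRQ, rfl⟩
      exact hxmaxlin y hyS hynn hyRQ
  have hRQxΛ : Stmt13.RQ A₃ x = Λ := by rw [← Stmt13.dot_eq_RQ, hxRQ, hA₃lam]
  have hmono : ∀ i j : Fin (n+1), i < j → x j ≤ x i := by
    intro i j hij
    by_contra hcon
    push_neg at hcon
    have hDji : D j ≤ D i := hD hij.le
    obtain ⟨B', hB'MD, hB'RQ⟩ := Stmt13.exists_transfer D A₃ hA₃MD i j hij hDji x hxnn hcon.le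
    set τ := Equiv.swap i j with hτ
    set y : Fin (n+1) → ℝ := fun u => x (τ u) with hy
    have hyS : y ∈ Stmt13.Sph n := by
      show (∑ u, y u ^ 2) = 1
      calc (∑ u, y u ^ 2) = ∑ u, x u ^ 2 := Equiv.sum_comp τ (fun u => x u ^ 2)
        _ = 1 := hxS
    have hynn : ∀ u, 0 ≤ y u := fun u => hxnn _
    have h1 : Λ ≤ Stmt13.RQ B' y := by rw [← hRQxΛ]; exact hB'RQ
    have h2' : Stmt13.RQ B' y ≤ lam1 B' := by
      rw [← Stmt13.dot_eq_RQ]; exact Stmt13.rq_le_lam1 hB'MD.1 hyS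
    have h3 : lam1 B' ≤ Λ := hmax B' hB'MD
    have hlamB' : lam1 B' = Λ := le_antisymm h3 (h1.trans h2')
    have hdoty : dotProduct y (B'.mulVec y) = lam1 B' := by
      rw [Stmt13.dot_eq_RQ, hlamB']
      linarith
    have hB'S1 : B' ∈ S1 := ⟨hB'MD, hlamB'⟩
    have hgt : (∑ u, wt u * x u) < ∑ u, wt u * y u := by
      have hdiff : (∑ u, (wt u * y u - wt u * x u)) = (wt i - wt j) * (x j - x i) := by
        have hsupp : ∀ u, u ≠ i → u ≠ j → wt u * y u - wt u * x u = 0 := by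
          intro u hui huj
          have hτu : τ u = u := Equiv.swap_apply_of_ne_of_ne hui huj
          simp [hy, hτu]
        rw [Stmt13.sum_pair_support _ i j hij.ne hsupp]
        simp only [hy, hτ, Equiv.swap_apply_left, Equiv.swap_apply_right]
        ring
      have hd2 : (∑ u, (wt u * y u - wt u * x u))
          = (∑ u, wt u * y u) - ∑ u, wt u * x u := Finset.sum_sub_distrib _ _
      nlinarith [hwt_anti i j hij]
    have hPsiB' : Psi A₂ < Psi B' := by
      calc Psi A₂ = Psi A₃ := hA₃Psi.symm
        _ = ∑ u, wt u * x u := hPsiA₃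
        _ < ∑ u, wt u * y u := hgt
        _ ≤ Psi B' := hPsi_le B' _ ⟨y, hyS, hynn, hdoty, rfl⟩
    exact absurd (hmax2 B' hB'S1) (not_le.2 hPsiB')
  refine ⟨A₃, hA₃MD, ?_, ?_⟩
  · intro B hB
    rw [hA₃lam]
    exact hmax B hB
  · rintro ⟨i, j, k, l, hij, hkl, hik, hil, hjk, hjl, hAil, hAjk, hAik, hAjl⟩
    set A' := Matrix.of fun u v => A₃ u v +
      ((Stmt13.ee i u - Stmt13.ee j u) * (Stmt13.ee k v - Stmt13.ee l v)
        + (Stmt13.ee k u - Stmt13.ee l u) * (Stmt13.ee i v - Stmt13.ee j v)) with hA'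
    have hA'MD : MemMD D A' := Stmt13.memMD_switch D A₃ hA₃MD i j k l hij.ne hkl.ne
      hik hil hjk hjl hAil hAjk hAik hAjl
    have hrqx : Stmt13.RQ A' x = Stmt13.RQ A₃ x + 2 * ((x i - x j) * (x k - x l)) := by
      have h := Stmt13.rq_add_pert A₃ (fun u => Stmt13.ee i u - Stmt13.ee j u)
        (fun u => Stmt13.ee k u - Stmt13.ee l u) x
      simp only [Stmt13.sum_ee_sub_mul] at h
      exact h
    have hrqw : Stmt13.RQ A' wt = Stmt13.RQ A₃ wt + 2 * ((wt i - wt j) * (wt k - wt l)) := by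
      have h := Stmt13.rq_add_pert A₃ (fun u => Stmt13.ee i u - Stmt13.ee j u)
        (fun u => Stmt13.ee k u - Stmt13.ee l u) wt
      simp only [Stmt13.sum_ee_sub_mul] at h
      exact h
    have hxm1 : x j ≤ x i := hmono i j hij
    have hxm2 : x l ≤ x k := hmono k l hkl
    have h1 : Λ ≤ Stmt13.RQ A' x := by
      rw [hrqx, hRQxΛ]
      nlinarith
    have h2' : Stmt13.RQ A' x ≤ lam1 A' := by
      rw [← Stmt13.dot_eq_RQ]; exact Stmt13.rq_le_lam1 hA'MD.1 hxS
    have h3 : lam1 A' ≤ Λ := hmax A' hA'MD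
    have hlamA' : lam1 A' = Λ := le_antisymm h3 (h1.trans h2')
    have hdotx : dotProduct x (A'.mulVec x) = lam1 A' := by
      rw [Stmt13.dot_eq_RQ, hlamA']
      linarith
    have hA'S1 : A' ∈ S1 := ⟨hA'MD, hlamA'⟩
    have hPsiA' : Psi A' = Psi A₂ := by
      refine le_antisymm (hmax2 A' hA'S1) ?_
      calc Psi A₂ = Psi A₃ := hA₃Psi.symm
        _ = ∑ u, wt u * x u := hPsiA₃
        _ ≤ Psi A' := hPsi_le A' _ ⟨x, hxS, hxnn, hdotx, rfl⟩
    have hfin := hmax3 A' ⟨hA'S1, hPsiA'⟩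
    replace hfin : Stmt13.RQ A' wt ≤ Stmt13.RQ A₃ wt := hfin
    rw [hrqw] at hfin
    nlinarith [hwt_anti i j hij, hwt_anti k l hkl]
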